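/- arXiv:1703.06797 — 3 statements merged into one kernel-verified Lean document; each statement's English description precedes it below -/
import Mathlib

section
/- Let b > 0 and m > 0 be real and let l be a nonzero integer. If ψ : (0,∞) → ℂ is twice continuously differentiable on (0,∞), square integrable with respect to Lebesgue measure on (0,∞), and satisfies the deficiency equation −(1/(2m))[ψ''(r) + (1/4 − l²)·ψ(r)/r² − (b²r²/4)·ψ(r)] = i·ψ(r) for all r ∈ (0,∞), then ψ is identically zero. -/
open MeasureTheory Set

private lemma mvt_aux (f f' : ℝ → ℝ) {s t : ℝ} (hst : s < t)
    (hd : ∀ r ∈ Set.Icc s t, HasDerivAt f (f' r) r) :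
    ∃ ξ ∈ Set.Ioo s t, f t - f s = f' ξ * (t - s) := by
  have hcont : ContinuousOn f (Set.Icc s t) := fun x hx =>
    (hd x hx).continuousAt.continuousWithinAt
  obtain ⟨ξ, hξ, hslope⟩ := exists_hasDerivAt_eq_slope f f' hst hcont
    (fun x hx => hd x (Set.Ioo_subset_Icc_self hx))
  refine ⟨ξ, hξ, ?_⟩
  rw [hslope, div_mul_eq_mul_div, mul_div_assoc, div_self (sub_ne_zero.2 hst.ne'), mul_one]

private lemma nosuper (v v1 v2 : ℝ → ℝ) (r₀ : ℝ) (hr₀ : 0 < r₀)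
    (hv : ∀ t ∈ Set.Ioc (0:ℝ) r₀, HasDerivAt v (v1 t) t)
    (hv1 : ∀ t ∈ Set.Ioc (0:ℝ) r₀, HasDerivAt v1 (v2 t) t)
    (hvpos : ∀ t ∈ Set.Ioc (0:ℝ) r₀, 0 < v t)
    (hv1np : v1 r₀ ≤ 0)
    (hv2low : ∀ t ∈ Set.Ioc (0:ℝ) r₀, 3/(4*t^2) * v t ≤ v2 t)
    (hvint : IntegrableOn (fun t => (v t)^2) (Set.Ioo 0 r₀) volume) : False := by
  set J : ℝ → ℝ := fun t => t * Real.sqrt t * v1 t - 3/2 * (Real.sqrt t * v t) with hJdef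
  set JD : ℝ → ℝ := fun t =>
    t * Real.sqrt t * v2 t - 3/(4*Real.sqrt t) * v t with hJDdef
  have hJ : ∀ t ∈ Set.Ioc (0:ℝ) r₀, HasDerivAt J (JD t) t := by
    intro t ht
    have hs : 0 < Real.sqrt t := Real.sqrt_pos.2 ht.1
    have hss : Real.sqrt t * Real.sqrt t = t := Real.mul_self_sqrt ht.1.le
    have hts : HasDerivAt Real.sqrt (1/(2*Real.sqrt t)) t := Real.hasDerivAt_sqrt ht.1.ne'
    have h1 : HasDerivAt (fun y : ℝ => y * Real.sqrt y)
        (1 * Real.sqrt t + t * (1/(2*Real.sqrt t))) t := (hasDerivAt_id' t).mul hts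
    have h2 : HasDerivAt (fun y : ℝ => y * Real.sqrt y * v1 y)
        ((1 * Real.sqrt t + t * (1/(2*Real.sqrt t))) * v1 t + t * Real.sqrt t * v2 t) t :=
      h1.mul (hv1 t ht)
    have h3 : HasDerivAt (fun y : ℝ => Real.sqrt y * v y)
        ((1/(2*Real.sqrt t)) * v t + Real.sqrt t * v1 t) t := hts.mul (hv t ht)
    have h4 := h2.sub (h3.const_mul (3/2))
    refine h4.congr_deriv ?_
    rw [hJDdef]
    simp only
    generalize Real.sqrt t = s at *
    subst hss
    have hs' : s ≠ 0 := hs.ne'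
    field_simp
    ring
  -- JD is nonnegative
  have hJDnn : ∀ t ∈ Set.Ioc (0:ℝ) r₀, 0 ≤ JD t := by
    intro t ht
    have hs : 0 < Real.sqrt t := Real.sqrt_pos.2 ht.1
    have hss : Real.sqrt t * Real.sqrt t = t := Real.mul_self_sqrt ht.1.le
    have ht0 : (0:ℝ) < t := ht.1
    have h2low := hv2low t ht
    have hvnn := (hvpos t ht).le
    have h5 : t * Real.sqrt t * (3/(4*t^2) * v t) = 3/(4*Real.sqrt t) * v t := by
      generalize Real.sqrt t = s at *
      subst hss
      field_simp
    have h6 : t * Real.sqrt t * (3/(4*t^2) * v t) ≤ t * Real.sqrt t * v2 t :=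
      mul_le_mul_of_nonneg_left h2low (by positivity)
    rw [hJDdef]
    simp only
    linarith
  -- J t ≤ J r₀ ≤ -β
  set β : ℝ := 3/2 * (Real.sqrt r₀ * v r₀) with hβdef
  have hβ : 0 < β := by
    have := hvpos r₀ ⟨hr₀, le_refl _⟩
    have := Real.sqrt_pos.2 hr₀
    positivity
  have hJr₀ : J r₀ ≤ -β := by
    have h1 : r₀ * Real.sqrt r₀ * v1 r₀ ≤ 0 :=
      mul_nonpos_of_nonneg_of_nonpos (by positivity) hv1np
    rw [hJdef]; simp only; rw [hβdef]; linarith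
  have hJle : ∀ t ∈ Set.Ioc (0:ℝ) r₀, J t ≤ -β := by
    intro t ht
    rcases eq_or_lt_of_le ht.2 with h | h
    · rw [h]; exact hJr₀
    · obtain ⟨ξ, hξ, heq⟩ := mvt_aux J JD h
        (fun x hx => hJ x ⟨lt_of_lt_of_le ht.1 hx.1, hx.2⟩)
      have := hJDnn ξ ⟨ht.1.trans hξ.1, hξ.2.le⟩
      nlinarith
  -- the function G
  set G : ℝ → ℝ := fun t => v t / (t * Real.sqrt t) - β/2 * (t^2)⁻¹ with hGdef
  set GD : ℝ → ℝ := fun t => (J t + β) / t^3 with hGDdef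
  have hG : ∀ t ∈ Set.Ioc (0:ℝ) r₀, HasDerivAt G (GD t) t := by
    intro t ht
    have ht0 : (0:ℝ) < t := ht.1
    have hs : 0 < Real.sqrt t := Real.sqrt_pos.2 ht.1
    have hss : Real.sqrt t * Real.sqrt t = t := Real.mul_self_sqrt ht.1.le
    have hts : HasDerivAt Real.sqrt (1/(2*Real.sqrt t)) t := Real.hasDerivAt_sqrt ht.1.ne'
    have h1 : HasDerivAt (fun y : ℝ => y * Real.sqrt y)
        (1 * Real.sqrt t + t * (1/(2*Real.sqrt t))) t := (hasDerivAt_id' t).mul hts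
    have h2 : HasDerivAt (fun y : ℝ => v y / (y * Real.sqrt y))
        ((v1 t * (t * Real.sqrt t) - v t * (1 * Real.sqrt t + t * (1/(2*Real.sqrt t))))
          / (t * Real.sqrt t)^2) t :=
      (hv t ht).div h1 (by positivity)
    have h3 : HasDerivAt (fun y : ℝ => (y^2)⁻¹) (-(2*t^(2-1)) / (t^2)^2) t :=
      (hasDerivAt_pow 2 t).inv (by positivity : (0:ℝ) < t^2).ne'
    have h4 := h2.sub ((h3.const_mul (β/2)))
    refine h4.congr_deriv ?_
    rw [hGDdef, hJdef]
    simp only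
    push_cast
    generalize Real.sqrt t = s at *
    subst hss
    have hs' : s ≠ 0 := hs.ne'
    field_simp
    ring
  have hGD : ∀ t ∈ Set.Ioc (0:ℝ) r₀, GD t ≤ 0 := by
    intro t ht
    have ht0 : (0:ℝ) < t := ht.1
    rw [hGDdef]
    simp only
    apply div_nonpos_of_nonpos_of_nonneg
    · have := hJle t ht; linarith
    · positivity
  -- G is bounded below by its value at r₀ on Ioo 0 r₀
  have hGlow : ∀ t ∈ Set.Ioo (0:ℝ) r₀, G r₀ ≤ G t := by
    intro t ht
    obtain ⟨ξ, hξ, heq⟩ := mvt_aux G GD ht.2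
      (fun x hx => hG x ⟨lt_of_lt_of_le ht.1 hx.1, hx.2⟩)
    have h1 := hGD ξ ⟨ht.1.trans hξ.1, hξ.2.le⟩
    nlinarith [ht.2]
  -- lower bound for v near 0
  set C₀ : ℝ := G r₀ with hC₀def
  set r₂ : ℝ := min r₀ (Real.sqrt (β/(4*(1+|C₀|)))) with hr₂def
  have hδpos : 0 < Real.sqrt (β/(4*(1+|C₀|))) := Real.sqrt_pos.2 (by positivity)
  have hr₂pos : 0 < r₂ := lt_min hr₀ hδpos
  clear_value J JD β G GD C₀ r₂
  have hvlow : ∀ t ∈ Set.Ioo (0:ℝ) r₂, β^2/16 * t⁻¹ ≤ (v t)^2 := by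
    intro t ht
    have ht0 : 0 < t := ht.1
    have htr₀ : t < r₀ := lt_of_lt_of_le ht.2 (hr₂def ▸ min_le_left _ _)
    have hG1 := hGlow t ⟨ht0, htr₀⟩
    rw [hGdef] at hG1
    simp only at hG1
    have hs : 0 < Real.sqrt t := Real.sqrt_pos.2 ht0
    have hss : Real.sqrt t * Real.sqrt t = t := Real.mul_self_sqrt ht0.le
    have ht2 : t^2 ≤ β/(4*(1+|C₀|)) := by
      have h1 : t ≤ Real.sqrt (β/(4*(1+|C₀|))) :=
        le_of_lt (lt_of_lt_of_le ht.2 (hr₂def ▸ min_le_right _ _))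
      calc t^2 ≤ (Real.sqrt (β/(4*(1+|C₀|))))^2 := by nlinarith
        _ = β/(4*(1+|C₀|)) := Real.sq_sqrt (by positivity)
    have habs : |C₀| * t^2 ≤ β/4 := by
      have h2 : |C₀| * t^2 ≤ |C₀| * (β/(4*(1+|C₀|))) :=
        mul_le_mul_of_nonneg_left ht2 (abs_nonneg _)
      have h3 : |C₀| * (β/(4*(1+|C₀|))) ≤ β/4 := by
        rw [mul_div_assoc', div_le_iff₀ (by positivity)]
        nlinarith [abs_nonneg C₀, hβ.le]
      linarith
    -- v t ≥ (C₀ + β/2 (t²)⁻¹) t √t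
    have hvt : (C₀ + β/2 * (t^2)⁻¹) * (t * Real.sqrt t) ≤ v t := by
      have hpos : 0 < t * Real.sqrt t := by positivity
      have := (le_div_iff₀ hpos).1 (by linarith : C₀ + β/2 * (t^2)⁻¹ ≤ v t / (t * Real.sqrt t))
      linarith
    have key : β/(4*Real.sqrt t) ≤ (C₀ + β/2 * (t^2)⁻¹) * (t * Real.sqrt t) := by
      generalize Real.sqrt t = s at *
      subst hss
      have hs' : s ≠ 0 := hs.ne'
      have e1 : (C₀ + β/2 * (((s*s))^2)⁻¹) * ((s*s) * s) = C₀*(s*s*s) + β/(2*s) := by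
        field_simp
      have h2 : -C₀ ≤ |C₀| := neg_le_abs C₀
      have h3 : -(C₀*(s*s*s)) ≤ |C₀| * (s*s*s) := by
        rw [← neg_mul]
        exact mul_le_mul_of_nonneg_right h2 (by positivity)
      have h4 : |C₀| * (s*s*s) ≤ β/(4*s) := by
        rw [le_div_iff₀ (by positivity : (0:ℝ) < 4*s)]
        calc |C₀| * (s*s*s) * (4*s) = 4 * (|C₀| * ((s*s)^2)) := by ring
          _ ≤ 4 * (β/4) := by linarith
          _ = β := by ring
      have e4 : β/(2*s) = 2*(β/(4*s)) := by
        field_simp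
        ring
      rw [e1, e4]
      linarith
    have hvt2 : β/(4*Real.sqrt t) ≤ v t := le_trans key hvt
    have h9 : (β/(4*Real.sqrt t))^2 ≤ (v t)^2 :=
      pow_le_pow_left₀ (by positivity) hvt2 2
    have h10 : (β/(4*Real.sqrt t))^2 = β^2/16 * t⁻¹ := by
      rw [div_pow, mul_pow, Real.sq_sqrt ht0.le]
      rw [show ((4:ℝ))^2 = 16 by norm_num]
      field_simp
    rw [h10] at h9
    exact h9
  -- contradiction with integrability
  have hsub : Set.Ioo (0:ℝ) r₂ ⊆ Set.Ioo 0 r₀ := Set.Ioo_subset_Ioo_right (hr₂def ▸ min_le_left _ _)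
  have hint2 : IntegrableOn (fun t => (v t)^2) (Set.Ioo 0 r₂) volume := hvint.mono_set hsub
  have hfint : IntegrableOn (fun t : ℝ => β^2/16 * t⁻¹) (Set.Ioo 0 r₂) volume := by
    refine Integrable.mono' hint2 ?_ ?_
    · exact (measurable_inv.const_mul _).aestronglyMeasurable
    · rw [ae_restrict_iff' measurableSet_Ioo]
      filter_upwards with x hx
      have h1 := hvlow x hx
      have hx0 : 0 < x := hx.1
      rw [Real.norm_eq_abs, abs_of_nonneg (by positivity)]
      exact h1
  have hinv : IntegrableOn (fun t : ℝ => t⁻¹) (Set.Ioo 0 r₂) volume := by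
    have h2 : IntegrableOn (fun t : ℝ => 16/β^2 * (β^2/16 * t⁻¹)) (Set.Ioo 0 r₂) volume :=
      hfint.const_mul (16/β^2)
    refine h2.congr_fun (fun x hx => ?_) measurableSet_Ioo
    have hx0 : x ≠ 0 := ne_of_gt hx.1
    field_simp
  have hrpow : IntegrableOn (fun x : ℝ => x ^ (-1:ℝ)) (Set.Ioo 0 r₂) volume := by
    refine hinv.congr_fun (fun x _ => ?_) measurableSet_Ioo
    exact (Real.rpow_neg_one x).symm
  have := (intervalIntegral.integrableOn_Ioo_rpow_iff hr₂pos).1 hrpow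
  norm_num at this


private lemma core (u u1 u2 w : ℝ → ℝ)
    (hu : ∀ r ∈ Set.Ioi (0:ℝ), HasDerivAt u (u1 r) r)
    (hu1 : ∀ r ∈ Set.Ioi (0:ℝ), HasDerivAt u1 (u2 r) r)
    (hupos : ∀ r ∈ Set.Ioi (0:ℝ), 0 ≤ u r)
    (hw : ∀ r ∈ Set.Ioi (0:ℝ), 0 ≤ w r)
    (hCS : ∀ r ∈ Set.Ioi (0:ℝ), u1 r ^ 2 ≤ 4 * u r * w r)
    (hineq : ∀ r ∈ Set.Ioi (0:ℝ), 2 * w r + 3/(2*r^2) * u r ≤ u2 r)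
    (hint : IntegrableOn u (Set.Ioi 0) volume) :
    ∀ r ∈ Set.Ioi (0:ℝ), u r = 0 := by
  -- u2 is nonnegative
  have hu2nn : ∀ r ∈ Set.Ioi (0:ℝ), 0 ≤ u2 r := by
    intro r hr
    have h1 := hw r hr
    have h2 := hupos r hr
    have h3 := hineq r hr
    have hr' : (0:ℝ) < r := hr
    have : 0 ≤ 3/(2*r^2) * u r := by positivity
    linarith
  -- u1 is monotone
  have hu1mono : ∀ s t : ℝ, 0 < s → s < t → u1 s ≤ u1 t := by
    intro s t hs hst
    obtain ⟨ξ, hξ, heq⟩ := mvt_aux u1 u2 hst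
      (fun r hr => hu1 r (lt_of_lt_of_le hs hr.1))
    nlinarith [hu2nn ξ (hs.trans hξ.1)]
  -- u1 is nonpositive
  have hu1np : ∀ r ∈ Set.Ioi (0:ℝ), u1 r ≤ 0 := by
    intro r₁ hr₁
    by_contra hpos
    push_neg at hpos
    have hr₁' : (0:ℝ) < r₁ := hr₁
    have hX : 0 < (1 + |u r₁|) / u1 r₁ := by positivity
    have hgrow : ∀ t, r₁ + (1 + |u r₁|) / u1 r₁ ≤ t → 1 ≤ u t := by
      intro t ht
      have htr : r₁ < t := by linarith
      obtain ⟨ξ, hξ, heq⟩ := mvt_aux u u1 htr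
        (fun r hr => hu r (lt_of_lt_of_le hr₁' hr.1))
      have hu1ξ : u1 r₁ ≤ u1 ξ := hu1mono r₁ ξ hr₁' hξ.1
      have h1 : u1 r₁ * (t - r₁) ≤ u t - u r₁ := by nlinarith
      have h2 : (1 + |u r₁|) ≤ u1 r₁ * (t - r₁) := by
        have h3 : (1 + |u r₁|) / u1 r₁ ≤ t - r₁ := by linarith
        calc (1 + |u r₁|) = u1 r₁ * ((1 + |u r₁|) / u1 r₁) := by field_simp
          _ ≤ u1 r₁ * (t - r₁) := mul_le_mul_of_nonneg_left h3 hpos.le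
      have h4 := neg_abs_le (u r₁)
      linarith
    -- contradiction with integrability
    have hTpos : 0 < r₁ + (1 + |u r₁|) / u1 r₁ := by linarith
    have hsub : Set.Ici (r₁ + (1 + |u r₁|) / u1 r₁) ⊆ Set.Ioi (0:ℝ) :=
      fun x hx => hTpos.trans_le hx
    have hint' : IntegrableOn u (Set.Ici (r₁ + (1 + |u r₁|) / u1 r₁)) volume :=
      hint.mono_set hsub
    have hconst : IntegrableOn (fun _ : ℝ => (1:ℝ))
        (Set.Ici (r₁ + (1 + |u r₁|) / u1 r₁)) volume := by
      refine Integrable.mono' hint' aestronglyMeasurable_const ?_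
      rw [ae_restrict_iff' measurableSet_Ici]
      filter_upwards with x hx
      simpa using hgrow x hx
    rcases (integrableOn_const_iff (C := (1:ℝ)) (μ := volume)).1 hconst with h | h
    · norm_num at h
    · rw [Real.volume_Ici] at h
      exact (lt_irrefl _ h).elim
  -- u is nonincreasing
  have huanti : ∀ s t : ℝ, 0 < s → s ≤ t → u t ≤ u s := by
    intro s t hs hst
    rcases eq_or_lt_of_le hst with rfl | hlt
    · exact le_refl _
    · obtain ⟨ξ, hξ, heq⟩ := mvt_aux u u1 hlt
        (fun r hr => hu r (lt_of_lt_of_le hs hr.1))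
      nlinarith [hu1np ξ (hs.trans hξ.1)]
  intro r₀ hr₀
  by_contra hne
  have hr₀' : (0:ℝ) < r₀ := hr₀
  have hχ : 0 < u r₀ := lt_of_le_of_ne (hupos r₀ hr₀) (Ne.symm hne)
  have hupos' : ∀ t ∈ Set.Ioc (0:ℝ) r₀, 0 < u t := fun t ht =>
    lt_of_lt_of_le hχ (huanti t r₀ ht.1 ht.2)
  refine nosuper (fun t => Real.sqrt (u t))
    (fun t => u1 t / (2 * Real.sqrt (u t)))
    (fun t => (u2 t * (2 * Real.sqrt (u t)) - u1 t * (2 * (u1 t / (2 * Real.sqrt (u t)))))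
        / (2 * Real.sqrt (u t))^2)
    r₀ hr₀' ?_ ?_ ?_ ?_ ?_ ?_
  · exact fun t ht => (hu t ht.1).sqrt (hupos' t ht).ne'
  · intro t ht
    have hs : 0 < Real.sqrt (u t) := Real.sqrt_pos.2 (hupos' t ht)
    exact (hu1 t ht.1).div (((hu t ht.1).sqrt (hupos' t ht).ne').const_mul 2)
      (by positivity)
  · exact fun t ht => Real.sqrt_pos.2 (hupos' t ht)
  · exact div_nonpos_of_nonpos_of_nonneg (hu1np r₀ hr₀) (by positivity)
  · intro t ht
    have ht0 : (0:ℝ) < t := ht.1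
    have hs : 0 < Real.sqrt (u t) := Real.sqrt_pos.2 (hupos' t ht)
    have hss : Real.sqrt (u t) * Real.sqrt (u t) = u t :=
      Real.mul_self_sqrt (hupos' t ht).le
    have hCS' := hCS t ht.1
    have hineq' := hineq t ht.1
    have hwt := hw t ht.1
    generalize Real.sqrt (u t) = s at *
    have hut : u t = s * s := hss.symm
    rw [hut] at hCS' hineq'
    rw [le_div_iff₀ (by positivity : (0:ℝ) < (2*s)^2)]
    have e5 : 3/(2*t^2) = 2*(3/(4*t^2)) := by
      field_simp
      ring
    have e6 : u1 t * (2*(u1 t/(2*s))) = u1 t^2 / s := by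
      field_simp
    have e7 : u1 t^2 / s ≤ 4*s*(w t) := by
      rw [div_le_iff₀ hs]
      nlinarith [hCS']
    have h8 : (2*(w t) + 3/(2*t^2)*(s*s))*(2*s) ≤ u2 t*(2*s) :=
      mul_le_mul_of_nonneg_right hineq' (by positivity)
    have h9 : 3/(2*t^2)*((s*s)*(2*s)) = 3/(4*t^2)*s*(2*s)^2 := by
      rw [e5]; ring
    rw [e6]
    nlinarith [h8, e7, h9]
  · refine (hint.mono_set (fun x hx => hx.1 : Set.Ioo (0:ℝ) r₀ ⊆ Set.Ioi 0)).congr_fun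
      (fun x hx => ?_) measurableSet_Ioo
    exact (Real.sq_sqrt (hupos x hx.1)).symm


/-- For `b > 0`, `m > 0` and a nonzero integer `l`, any twice continuously differentiable,
square-integrable solution `ψ` on `(0,∞)` of the deficiency equation
`−(1/(2m))[ψ'' + (1/4 − l²)ψ/r² − (b²r²/4)ψ] = i ψ` vanishes identically on `(0,∞)`. -/
theorem deficiency_plus_trivial_of_l_ne_zero
    (b m : ℝ) (hb : 0 < b) (hm : 0 < m) (l : ℤ) (hl : l ≠ 0)
    (ψ : ℝ → ℂ)
    (hsmooth : ContDiffOn ℝ 2 ψ (Set.Ioi 0))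
    (hL2 : MemLp ψ 2 (volume.restrict (Set.Ioi 0)))
    (hode : ∀ r ∈ Set.Ioi (0 : ℝ),
      -(1 / (2 * (m : ℂ))) * (deriv (deriv ψ) r
          + ((1 : ℂ) / 4 - (l : ℂ) ^ 2) * ψ r / (r : ℂ) ^ 2
          - (b : ℂ) ^ 2 * (r : ℂ) ^ 2 / 4 * ψ r)
        = Complex.I * ψ r) :
    ∀ r ∈ Set.Ioi (0 : ℝ), ψ r = 0 := by
  have h2 : ContDiffOn ℝ (1+1) ψ (Set.Ioi 0) := by
    have e : ((1:WithTop ℕ∞)+1) = 2 := by norm_num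
    rw [e]; exact hsmooth
  have h' := (contDiffOn_succ_iff_deriv_of_isOpen isOpen_Ioi).mp h2
  have hψd : DifferentiableOn ℝ ψ (Set.Ioi 0) := h'.1
  have hd2 : ContDiffOn ℝ 1 (deriv ψ) (Set.Ioi 0) := h'.2.2
  have hψ' : ∀ r ∈ Set.Ioi (0:ℝ), HasDerivAt ψ (deriv ψ r) r := fun r hr =>
    (hψd.differentiableAt (Ioi_mem_nhds hr)).hasDerivAt
  have hψ'' : ∀ r ∈ Set.Ioi (0:ℝ), HasDerivAt (deriv ψ) (deriv (deriv ψ) r) r := fun r hr =>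
    ((hd2.differentiableOn one_ne_zero).differentiableAt (Ioi_mem_nhds hr)).hasDerivAt
  -- the ODE rearranged
  have hode' : ∀ r ∈ Set.Ioi (0:ℝ), deriv (deriv ψ) r
      = ((((l:ℝ)^2 - 1/4)/r^2 + b^2*r^2/4 : ℝ) : ℂ) * ψ r - 2*(m:ℂ)*Complex.I*ψ r := by
    intro r hr
    have h := hode r hr
    have hm0 : (m:ℂ) ≠ 0 := Complex.ofReal_ne_zero.2 hm.ne'
    have hr0 : (r:ℂ) ≠ 0 := Complex.ofReal_ne_zero.2 (ne_of_gt hr)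
    field_simp [hm0, hr0] at h
    push_cast
    field_simp [hm0, hr0]
    linear_combination (-1:ℂ) * h
  -- real and imaginary parts
  have hre : ∀ r ∈ Set.Ioi (0:ℝ), HasDerivAt (fun s => (ψ s).re) ((deriv ψ r).re) r := by
    intro r hr
    exact (Complex.reCLM.hasFDerivAt.comp_hasDerivAt r (hψ' r hr))
  have him : ∀ r ∈ Set.Ioi (0:ℝ), HasDerivAt (fun s => (ψ s).im) ((deriv ψ r).im) r := by
    intro r hr
    exact (Complex.imCLM.hasFDerivAt.comp_hasDerivAt r (hψ' r hr))
  have hre' : ∀ r ∈ Set.Ioi (0:ℝ),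
      HasDerivAt (fun s => (deriv ψ s).re) ((deriv (deriv ψ) r).re) r := by
    intro r hr
    exact (Complex.reCLM.hasFDerivAt.comp_hasDerivAt r (hψ'' r hr))
  have him' : ∀ r ∈ Set.Ioi (0:ℝ),
      HasDerivAt (fun s => (deriv ψ s).im) ((deriv (deriv ψ) r).im) r := by
    intro r hr
    exact (Complex.imCLM.hasFDerivAt.comp_hasDerivAt r (hψ'' r hr))
  have hre2 : ∀ r ∈ Set.Ioi (0:ℝ), (deriv (deriv ψ) r).re
      = (((l:ℝ)^2 - 1/4)/r^2 + b^2*r^2/4) * (ψ r).re + 2*m*(ψ r).im := by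
    intro r hr
    rw [hode' r hr]
    generalize ((l:ℝ)^2 - 1/4)/r^2 + b^2*r^2/4 = q
    simp [Complex.sub_re, Complex.mul_re, Complex.mul_im, Complex.I_re, Complex.I_im,
      Complex.ofReal_re, Complex.ofReal_im]
  have him2 : ∀ r ∈ Set.Ioi (0:ℝ), (deriv (deriv ψ) r).im
      = (((l:ℝ)^2 - 1/4)/r^2 + b^2*r^2/4) * (ψ r).im - 2*m*(ψ r).re := by
    intro r hr
    rw [hode' r hr]
    generalize ((l:ℝ)^2 - 1/4)/r^2 + b^2*r^2/4 = q
    simp [Complex.sub_im, Complex.mul_re, Complex.mul_im, Complex.I_re, Complex.I_im,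
      Complex.ofReal_re, Complex.ofReal_im]
  have hl1 : (1:ℝ) ≤ (l:ℝ)^2 := by
    have h1 : (1:ℤ) ≤ |l| := Int.one_le_abs hl
    have h2 : (1:ℤ) ≤ l^2 := by nlinarith [sq_abs l]
    exact_mod_cast h2
  have hcore := core (fun r => (ψ r).re^2 + (ψ r).im^2)
    (fun r => 2*((ψ r).re*(deriv ψ r).re + (ψ r).im*(deriv ψ r).im))
    (fun r => 2*((deriv ψ r).re^2 + (deriv ψ r).im^2
        + (ψ r).re*(deriv (deriv ψ) r).re + (ψ r).im*(deriv (deriv ψ) r).im))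
    (fun r => (deriv ψ r).re^2 + (deriv ψ r).im^2)
    ?_ ?_ ?_ ?_ ?_ ?_ ?_
  rotate_left
  · intro r hr
    have h := ((hre r hr).pow 2).add ((him r hr).pow 2)
    refine h.congr_deriv ?_
    push_cast
    ring
  · intro r hr
    have h := (((hre r hr).mul (hre' r hr)).add ((him r hr).mul (him' r hr))).const_mul 2
    refine h.congr_deriv ?_
    ring
  · intro r hr; positivity
  · intro r hr; positivity
  · intro r hr
    nlinarith [sq_nonneg ((ψ r).re*(deriv ψ r).im - (ψ r).im*(deriv ψ r).re)]
  · intro r hr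
    have hr' : (0:ℝ) < r := hr
    have e2 := hre2 r hr
    have e3 := him2 r hr
    rw [e2, e3]
    have hp : 3/(4*r^2) ≤ ((l:ℝ)^2 - 1/4)/r^2 + b^2*r^2/4 := by
      have h1 : 3/(4*r^2) ≤ ((l:ℝ)^2 - 1/4)/r^2 := by
        rw [div_le_div_iff₀ (by positivity) (by positivity)]
        nlinarith [sq_nonneg r]
      have h2 : (0:ℝ) ≤ b^2*r^2/4 := by positivity
      linarith
    have e5 : 3/(2*r^2) = 2*(3/(4*r^2)) := by
      field_simp
      ring
    have h6 : 3/(4*r^2)*((ψ r).re^2+(ψ r).im^2)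
        ≤ (((l:ℝ)^2 - 1/4)/r^2 + b^2*r^2/4) * ((ψ r).re^2+(ψ r).im^2) :=
      mul_le_mul_of_nonneg_right hp (by positivity)
    nlinarith [h6, e5]
  · have hi := hL2.integrable_norm_rpow (by norm_num) (by norm_num)
    have ht2 : ((2:ENNReal).toReal) = (2:ℝ) := by simp
    rw [ht2] at hi
    have heq : (fun x => ‖ψ x‖ ^ (2:ℝ)) = fun x => (ψ x).re^2 + (ψ x).im^2 := by
      funext x
      rw [show (2:ℝ) = ((2:ℕ):ℝ) by norm_num, Real.rpow_natCast]
      rw [Complex.sq_norm, Complex.normSq_apply]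
      ring
    rwa [heq] at hi
  intro r hr
  have h := hcore r hr
  have h1 : (ψ r).re = 0 := by nlinarith [sq_nonneg (ψ r).re, sq_nonneg (ψ r).im]
  have h2 : (ψ r).im = 0 := by nlinarith [sq_nonneg (ψ r).re, sq_nonneg (ψ r).im]
  exact Complex.ext h1 h2
end

section
/- Let b > 0 and m > 0 be real and let l be a nonzero integer. If ψ : (0,∞) → ℂ is twice continuously differentiable on (0,∞), square integrable with respect to Lebesgue measure on (0,∞), and satisfies the deficiency equation −(1/(2m))[ψ''(r) + (1/4 − l²)·ψ(r)/r² − (b²r²/4)·ψ(r)] = −i·ψ(r) for all r ∈ (0,∞), then ψ is identically zero. -/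
open MeasureTheory Set

lemma myMonoOn {f f' : ℝ → ℝ} {D U : Set ℝ} (hD : Convex ℝ D) (hDU : D ⊆ U)
    (hf : ∀ x ∈ U, HasDerivAt f (f' x) x) (h0 : ∀ x ∈ interior D, 0 ≤ f' x) :
    MonotoneOn f D :=
  monotoneOn_of_deriv_nonneg hD
    (fun x hx => (hf x (hDU hx)).continuousAt.continuousWithinAt)
    (fun x hx => (hf x (hDU (interior_subset hx))).differentiableAt.differentiableWithinAt)
    (fun x hx => by rw [(hf x (hDU (interior_subset hx))).deriv]; exact h0 x hx)

lemma myAntiOn {f f' : ℝ → ℝ} {D U : Set ℝ} (hD : Convex ℝ D) (hDU : D ⊆ U)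
    (hf : ∀ x ∈ U, HasDerivAt f (f' x) x) (h0 : ∀ x ∈ interior D, f' x ≤ 0) :
    AntitoneOn f D :=
  antitoneOn_of_deriv_nonpos hD
    (fun x hx => (hf x (hDU hx)).continuousAt.continuousWithinAt)
    (fun x hx => (hf x (hDU (interior_subset hx))).differentiableAt.differentiableWithinAt)
    (fun x hx => by rw [(hf x (hDU (interior_subset hx))).deriv]; exact h0 x hx)

lemma no_int_const {g : ℝ → ℝ} (hg : IntegrableOn g (Ioi 0) volume) {c R : ℝ}
    (hc : 0 < c) (hR : 0 < R) (hbound : ∀ r ∈ Ioi R, c ≤ g r) : False := by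
  have hsub : Ioi R ⊆ Ioi (0:ℝ) := fun x hx => lt_trans hR hx
  have h1 : IntegrableOn g (Ioi R) volume := hg.mono_set hsub
  have h2 : Integrable (fun _ : ℝ => c) (volume.restrict (Ioi R)) := by
    apply Integrable.mono' h1 aestronglyMeasurable_const
    rw [ae_restrict_iff' measurableSet_Ioi]
    filter_upwards with x hx
    rw [Real.norm_eq_abs, abs_of_nonneg hc.le]
    exact hbound x hx
  rcases integrable_const_iff.1 h2 with h | h
  · exact hc.ne' h
  · rw [isFiniteMeasure_restrict, Real.volume_Ioi] at h
    exact h rfl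

lemma no_int_inv {g : ℝ → ℝ} (hg : IntegrableOn g (Ioi 0) volume) {c T : ℝ}
    (hc : 0 < c) (hT : 0 < T) (hbound : ∀ r ∈ Ioo (0:ℝ) T, c * r⁻¹ ≤ g r) : False := by
  have hsub : Ioo (0:ℝ) T ⊆ Ioi 0 := fun x hx => hx.1
  have h1 : IntegrableOn g (Ioo 0 T) volume := hg.mono_set hsub
  have h2 : IntegrableOn (fun r : ℝ => c * r⁻¹) (Ioo 0 T) volume := by
    apply Integrable.mono' h1 (measurable_const.mul measurable_inv).aestronglyMeasurable
    rw [ae_restrict_iff' measurableSet_Ioo]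
    filter_upwards with x hx
    change ‖c * x⁻¹‖ ≤ g x
    rw [Real.norm_eq_abs, abs_of_nonneg (mul_nonneg hc.le (inv_nonneg.2 (le_of_lt hx.1)))]
    exact hbound x hx
  have h3 : IntegrableOn (fun r : ℝ => r ^ (-1 : ℝ)) (Ioo (0:ℝ) T) volume := by
    have h4 : IntegrableOn (fun x : ℝ => c⁻¹ * (c * x⁻¹)) (Ioo (0:ℝ) T) volume :=
      h2.const_mul c⁻¹
    refine IntegrableOn.congr_fun h4 (fun x hx => ?_) measurableSet_Ioo
    rw [Real.rpow_neg_one]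
    field_simp
  rw [intervalIntegral.integrableOn_Ioo_rpow_iff hT] at h3
  linarith

/-- Abstract core: `g = |ψ|²`, `F = Re(ψ̄ψ')`, `N = |ψ'|²`. -/
lemma core_vanish (g F N q : ℝ → ℝ) (bb : ℝ) (hbb : 0 < bb)
    (hgnn : ∀ r, 0 ≤ g r) (hNnn : ∀ r, 0 ≤ N r)
    (hq0 : ∀ r ∈ Ioi (0:ℝ), 0 ≤ q r)
    (hq : ∀ r ∈ Ioi (0:ℝ), 3/4 + bb*r^4/4 ≤ r^2 * q r)
    (hgd : ∀ r ∈ Ioi (0:ℝ), HasDerivAt g (2 * F r) r)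
    (hFd : ∀ r ∈ Ioi (0:ℝ), HasDerivAt F (N r + q r * g r) r)
    (hF2 : ∀ r, (F r)^2 ≤ g r * N r)
    (hInt : IntegrableOn g (Ioi 0) volume) :
    ∀ r ∈ Ioi (0:ℝ), g r = 0 := by
  -- F is monotone
  have monoF : MonotoneOn F (Ioi 0) :=
    myMonoOn (convex_Ioi 0) (subset_refl _) hFd
      (fun x hx => by
        rw [interior_Ioi] at hx
        exact add_nonneg (hNnn x) (mul_nonneg (hq0 x hx) (hgnn x)))
  -- F is nonpositive
  have hF0 : ∀ r ∈ Ioi (0:ℝ), F r ≤ 0 := by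
    by_contra hcon
    push_neg at hcon
    obtain ⟨r0, hr0, hc⟩ := hcon
    have hr0' : (0:ℝ) < r0 := hr0
    have hmono2 : MonotoneOn (fun r => g r - 2 * F r0 * r) (Ici r0) := by
      refine myMonoOn (convex_Ici r0) (fun x hx => lt_of_lt_of_le hr0' hx)
        (f' := fun x => 2 * F x - 2 * F r0) (fun x hx => ?_) (fun x hx => ?_)
      · have h := (hgd x hx).sub ((hasDerivAt_id x).const_mul (2 * F r0))
        convert h using 1
        · rfl
        · rfl
        · rfl
        ring
      · rw [interior_Ici] at hx
        have : F r0 ≤ F x := monoF hr0 (lt_trans hr0' hx) (le_of_lt hx)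
        show (0:ℝ) ≤ 2 * F x - 2 * F r0
        linarith
    refine no_int_const hInt (show (0:ℝ) < 2 * F r0 by linarith)
      (show (0:ℝ) < r0 + 1 by linarith) (fun r hrR => ?_)
    have h6 : r0 + 1 < r := hrR
    have hrr : r0 ≤ r := by linarith
    have h5 := hmono2 self_mem_Ici hrr hrr
    have h7 := hgnn r0
    dsimp only at h5
    nlinarith
  -- the key function K and its derivative bound
  have hKd : ∀ r ∈ Ioi (0:ℝ), HasDerivAt (fun r => r^2 * F r - r * g r / 2)
      (r * F r + r^2 * (N r + q r * g r) - g r / 2) r := by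
    intro r hr
    have h := ((hasDerivAt_pow 2 r).mul (hFd r hr)).sub
      (((hasDerivAt_id r).mul (hgd r hr)).div_const 2)
    convert h using 1
    · rfl
    · rfl
    · rfl
    push_cast
    simp only [id_eq]
    ring
  have hK'ge : ∀ r ∈ Ioi (0:ℝ),
      bb * r^4/4 * g r ≤ r * F r + r^2 * (N r + q r * g r) - g r / 2 := by
    intro r hr
    have hr0 : (0:ℝ) < r := hr
    have h2 := hF2 r
    have hNr := hNnn r
    have hg' := hgnn r
    have hA : (0:ℝ) ≤ r^2 * N r + g r / 4 :=
      add_nonneg (mul_nonneg (sq_nonneg r) hNr) (by linarith)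
    have key : 0 ≤ r * F r + r^2 * N r + g r / 4 := by
      nlinarith [mul_le_mul_of_nonneg_left h2 (sq_nonneg r),
        sq_nonneg (r^2 * N r - g r / 4), hA, mul_nonneg hA hA]
    have hqr := hq r hr
    have hq2 : (3/4 + bb*r^4/4) * g r ≤ r^2 * q r * g r :=
      mul_le_mul_of_nonneg_right hqr hg'
    nlinarith
  have hKle : ∀ r ∈ Ioi (0:ℝ), r^2 * F r - r * g r / 2 ≤ 0 := by
    intro r hr
    have hr0 : (0:ℝ) < r := hr
    have h1 := hF0 r hr
    have h2 := hgnn r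
    nlinarith [mul_nonneg (sq_nonneg r) (neg_nonneg.2 h1), mul_nonneg hr0.le h2]
  have hKge : ∀ r ∈ Ioi (0:ℝ), 0 ≤ r^2 * F r - r * g r / 2 := by
    by_contra hcon
    push_neg at hcon
    obtain ⟨r0, hr0, hKneg⟩ := hcon
    have hr0' : (0:ℝ) < r0 := hr0
    set c := -(r0^2 * F r0 - r0 * g r0 / 2)/2 with hc_def
    have hc : 0 < c := by rw [hc_def]; linarith
    have monoK : MonotoneOn (fun r => r^2 * F r - r * g r / 2) (Ioi 0) :=
      myMonoOn (convex_Ioi 0) (subset_refl _) hKd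
        (fun x hx => by
          rw [interior_Ioi] at hx
          have h1 := hK'ge x hx
          have h2 := hgnn x
          have hx0 : (0:ℝ) < x := hx
          have h3 : (0:ℝ) ≤ bb * x^4/4 * g x :=
            mul_nonneg (by positivity) h2
          linarith)
    have hΦd : ∀ r ∈ Ioi (0:ℝ), HasDerivAt (fun r => (g r * r - 2*c)/r^2)
        ((((2*F r)*r + g r)*r^2 - (g r * r - 2*c)*(2*r))/(r^2)^2) r := by
      intro r hr
      have hrne : r ≠ 0 := ne_of_gt hr
      have h := (((hgd r hr).mul (hasDerivAt_id r)).sub_const (2*c)).div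
        (hasDerivAt_pow 2 r) (pow_ne_zero 2 hrne)
      convert h using 1
      · rfl
      · rfl
      · rfl
      push_cast
      simp only [id_eq, Pi.mul_apply]
      ring
    have antiΦ : AntitoneOn (fun r => (g r * r - 2*c)/r^2) (Ioc 0 r0) := by
      refine myAntiOn (convex_Ioc 0 r0) (fun x hx => hx.1) hΦd (fun x hx => ?_)
      rw [interior_Ioc] at hx
      have hx0 : (0:ℝ) < x := hx.1
      have hKx : x^2 * F x - x * g x / 2 ≤ -(2*c) := by
        have h1 : x^2 * F x - x * g x / 2 ≤ r0^2 * F r0 - r0 * g r0 / 2 :=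
          monoK hx.1 hr0 (le_of_lt hx.2)
        rw [hc_def] at *
        linarith
      apply div_nonpos_of_nonpos_of_nonneg _ (by positivity)
      nlinarith
    refine no_int_inv hInt hc (show (0:ℝ) < r0/2 by linarith) (fun r hrT => ?_)
    have hr1 : (0:ℝ) < r := hrT.1
    have hr2 : r < r0/2 := hrT.2
    have hrr : r ∈ Ioc 0 r0 := ⟨hr1, by linarith⟩
    have h5 := antiΦ hrr (right_mem_Ioc.2 hr0') hrr.2
    dsimp only at h5
    rw [div_le_div_iff₀ (by positivity) (by positivity)] at h5
    rw [show c * r⁻¹ = c / r from (div_eq_mul_inv c r).symm, div_le_iff₀ hr1]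
    have hgr0 := hgnn r0
    have hrsq : r^2 ≤ r0^2/4 := by nlinarith
    nlinarith [mul_pos hr0' hr0', mul_nonneg (mul_nonneg hgr0 hr0'.le) (sq_nonneg r)]
  -- conclude
  intro r hr
  have hr0 : (0:ℝ) < r := hr
  have hKd0 : HasDerivAt (fun r => r^2 * F r - r * g r / 2) 0 r := by
    have heq : (fun r => r^2 * F r - r * g r / 2) =ᶠ[nhds r] (fun _ => (0:ℝ)) := by
      filter_upwards [isOpen_Ioi.mem_nhds hr] with x hx
      exact le_antisymm (hKle x hx) (hKge x hx)
    exact (hasDerivAt_const r (0:ℝ)).congr_of_eventuallyEq heq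
  have h0 : r * F r + r^2 * (N r + q r * g r) - g r / 2 = 0 := (hKd r hr).unique hKd0
  have h1 := hK'ge r hr
  rw [h0] at h1
  have h2 := hgnn r
  have hpos : (0:ℝ) < bb * r^4/4 := by positivity
  nlinarith

/-- For `b > 0`, `m > 0` and a nonzero integer `l`, any twice continuously differentiable,
square-integrable solution `ψ` on `(0,∞)` of the deficiency equation
`−(1/(2m))[ψ'' + (1/4 − l²)ψ/r² − (b²r²/4)ψ] = −i ψ` vanishes identically on `(0,∞)`. -/
theorem deficiency_minus_trivial_of_l_ne_zero
    (b m : ℝ) (hb : 0 < b) (hm : 0 < m) (l : ℤ) (hl : l ≠ 0)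
    (ψ : ℝ → ℂ)
    (hsmooth : ContDiffOn ℝ 2 ψ (Set.Ioi 0))
    (hL2 : MemLp ψ 2 (volume.restrict (Set.Ioi 0)))
    (hode : ∀ r ∈ Set.Ioi (0 : ℝ),
      -(1 / (2 * (m : ℂ))) * (deriv (deriv ψ) r
          + ((1 : ℂ) / 4 - (l : ℂ) ^ 2) * ψ r / (r : ℂ) ^ 2
          - (b : ℂ) ^ 2 * (r : ℂ) ^ 2 / 4 * ψ r)
        = -Complex.I * ψ r) :
    ∀ r ∈ Set.Ioi (0 : ℝ), ψ r = 0 := by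
  -- differentiability
  have hψd : ∀ r ∈ Ioi (0:ℝ), HasDerivAt ψ (deriv ψ r) r := by
    intro r hr
    exact ((hsmooth.differentiableOn (by norm_num)).differentiableAt
      (isOpen_Ioi.mem_nhds hr)).hasDerivAt
  have hψ'd : ∀ r ∈ Ioi (0:ℝ), HasDerivAt (deriv ψ) (deriv (deriv ψ) r) r := by
    intro r hr
    have h1 : ContDiffOn ℝ 1 (deriv ψ) (Ioi 0) :=
      hsmooth.deriv_of_isOpen isOpen_Ioi (by norm_num)
    exact ((h1.differentiableOn (by norm_num)).differentiableAt
      (isOpen_Ioi.mem_nhds hr)).hasDerivAt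
  -- real/imaginary coordinates
  set u : ℝ → ℝ := fun r => (ψ r).re with hu_def
  set v : ℝ → ℝ := fun r => (ψ r).im with hv_def
  set u' : ℝ → ℝ := fun r => (deriv ψ r).re with hu'_def
  set v' : ℝ → ℝ := fun r => (deriv ψ r).im with hv'_def
  set q : ℝ → ℝ := fun r => (((l:ℝ)^2 - 1/4)/r^2 + b^2*r^2/4) with hq_def
  have hud : ∀ r ∈ Ioi (0:ℝ), HasDerivAt u (u' r) r := fun r hr =>
    Complex.reCLM.hasFDerivAt.comp_hasDerivAt r (hψd r hr)
  have hvd : ∀ r ∈ Ioi (0:ℝ), HasDerivAt v (v' r) r := fun r hr =>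
    Complex.imCLM.hasFDerivAt.comp_hasDerivAt r (hψd r hr)
  -- ODE in coordinates
  have hl2 : (1:ℝ) ≤ (l:ℝ)^2 := by
    have : (1:ℤ) ≤ l^2 := by
      rcases lt_or_gt_of_ne hl with h | h <;> nlinarith
    exact_mod_cast this
  have hode' : ∀ r ∈ Ioi (0:ℝ),
      deriv (deriv ψ) r = (((q r : ℝ) : ℂ) + 2*(m:ℂ)*Complex.I) * ψ r := by
    intro r hr
    have hr0 : (0:ℝ) < r := hr
    have hrc : (r:ℂ) ≠ 0 := by exact_mod_cast hr0.ne'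
    have hmc : (m:ℂ) ≠ 0 := by exact_mod_cast hm.ne'
    have h := hode r hr
    have hq : ((q r : ℝ) : ℂ) = ((l:ℂ)^2 - 1/4)/(r:ℂ)^2 + (b:ℂ)^2*(r:ℂ)^2/4 := by
      rw [hq_def]; push_cast; ring
    rw [hq]
    field_simp [hmc, hrc] at h
    field_simp [hrc]
    linear_combination -h
  have hu''d : ∀ r ∈ Ioi (0:ℝ), HasDerivAt u' (q r * u r - 2*m*v r) r := by
    intro r hr
    have h : HasDerivAt u' ((deriv (deriv ψ) r).re) r :=
      Complex.reCLM.hasFDerivAt.comp_hasDerivAt r (hψ'd r hr)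
    have he : (deriv (deriv ψ) r).re = q r * u r - 2*m*v r := by
      rw [hode' r hr]; simp [Complex.mul_re, hu_def, hv_def]
    rwa [he] at h
  have hv''d : ∀ r ∈ Ioi (0:ℝ), HasDerivAt v' (q r * v r + 2*m*u r) r := by
    intro r hr
    have h : HasDerivAt v' ((deriv (deriv ψ) r).im) r :=
      Complex.imCLM.hasFDerivAt.comp_hasDerivAt r (hψ'd r hr)
    have he : (deriv (deriv ψ) r).im = q r * v r + 2*m*u r := by
      rw [hode' r hr]; simp [Complex.mul_im, hu_def, hv_def]
    rwa [he] at h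
  -- quadratic quantities
  set g : ℝ → ℝ := fun r => u r^2 + v r^2 with hg_def
  set F : ℝ → ℝ := fun r => u r * u' r + v r * v' r with hF_def
  set N : ℝ → ℝ := fun r => u' r^2 + v' r^2 with hN_def
  have hgnn : ∀ r, 0 ≤ g r := fun r => by positivity
  have hNnn : ∀ r, 0 ≤ N r := fun r => by positivity
  have hq0 : ∀ r ∈ Ioi (0:ℝ), 0 ≤ q r := by
    intro r hr
    have hr0 : (0:ℝ) < r := hr
    have h1 : (0:ℝ) ≤ ((l:ℝ)^2 - 1/4)/r^2 := div_nonneg (by linarith) (by positivity)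
    have h2 : (0:ℝ) ≤ b^2*r^2/4 := by positivity
    rw [hq_def]; dsimp only; linarith
  have hq34 : ∀ r ∈ Ioi (0:ℝ), 3/4 + b^2*r^4/4 ≤ r^2 * q r := by
    intro r hr
    have hr0 : (0:ℝ) < r := hr
    have he : r^2 * q r = ((l:ℝ)^2 - 1/4) + b^2*r^4/4 := by
      rw [hq_def]; dsimp only; field_simp
    rw [he]; linarith
  have hgd : ∀ r ∈ Ioi (0:ℝ), HasDerivAt g (2 * F r) r := by
    intro r hr
    have h := ((hud r hr).mul (hud r hr)).add ((hvd r hr).mul (hvd r hr))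
    convert h using 1
    · rfl
    · rfl
    · funext x; rw [hg_def]; simp only [Pi.add_apply, Pi.pow_apply, Pi.mul_apply, sq]
    · rw [hF_def]; ring
  have hFd : ∀ r ∈ Ioi (0:ℝ), HasDerivAt F (N r + q r * g r) r := by
    intro r hr
    have h := (((hud r hr).mul (hu''d r hr)).add ((hvd r hr).mul (hv''d r hr)))
    convert h using 1
    · rfl
    · rfl
    · rfl
    rw [hN_def, hg_def]; ring
  have hF2 : ∀ r, (F r)^2 ≤ g r * N r := by
    intro r
    rw [hF_def, hg_def, hN_def]
    dsimp only
    nlinarith [sq_nonneg (u r * v' r - v r * u' r)]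
  have hInt : IntegrableOn g (Ioi 0) volume := by
    have h0 := hL2.integrable_norm_rpow (by norm_num) (by norm_num)
    refine h0.congr (ae_of_all _ fun x => ?_)
    have h1 : ((2:ENNReal)).toReal = ((2:ℕ):ℝ) := by norm_num
    rw [h1]; dsimp only
    rw [Real.rpow_natCast, Complex.sq_norm, Complex.normSq_apply]
    rw [hg_def, hu_def, hv_def]; ring
  have main := core_vanish g F N q (b^2) (by positivity) hgnn hNnn hq0 hq34 hgd hFd hF2 hInt
  intro r hr
  have hg0 : u r^2 + v r^2 = 0 := by
    have h := main r hr
    rw [hg_def] at h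
    exact h
  have h1 : u r = 0 := by nlinarith [sq_nonneg (u r), sq_nonneg (v r)]
  have h2 : v r = 0 := by nlinarith [sq_nonneg (u r), sq_nonneg (v r)]
  have h1' : (ψ r).re = 0 := by rw [hu_def] at h1; exact h1
  have h2' : (ψ r).im = 0 := by rw [hv_def] at h2; exact h2
  exact Complex.ext (by simpa using h1') (by simpa using h2')
end

section
/- Let b > 0 and m > 0 be real. If ψ₁ and ψ₂ are functions (0,∞) → ℂ that are twice continuously differentiable on (0,∞), square integrable with respect to Lebesgue measure on (0,∞), and both satisfy −(1/(2m))[ψ''(r) + (1/4)·ψ(r)/r² − (b²r²/4)·ψ(r)] = i·ψ(r) for all r ∈ (0,∞), then ψ₁ and ψ₂ are linearly dependent over ℂ: there exist complex numbers c₁, c₂, not both zero, with c₁ψ₁ + c₂ψ₂ = 0 on (0,∞). -/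
open MeasureTheory Set Complex
noncomputable def QQ (b m : ℝ) (r : ℝ) : ℂ :=
  ((b^2*r^2/4 - 1/(4*r^2) : ℝ) : ℂ) - 2*m*Complex.I

theorem QQre (b m : ℝ) (t : ℝ) : (QQ b m t).re = b^2*t^2/4 - 1/(4*t^2) := by
  unfold QQ
  rw [Complex.sub_re, Complex.ofReal_re]
  simp

theorem QQreCont (b m : ℝ) : ContinuousOn (fun t => (QQ b m t).re) (Set.Ioi 0) := by
  have : ContinuousOn (fun t:ℝ => b^2*t^2/4 - 1/(4*t^2)) (Set.Ioi 0) := by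
    apply ContinuousOn.sub
    · fun_prop
    · exact continuousOn_const.div (by fun_prop)
        (fun t ht => by have h := mem_Ioi.mp ht; positivity)
  exact this.congr (fun t _ => QQre b m t)

theorem QQre_ge (b m t : ℝ) (ht : 1 ≤ t) : -(1/4 : ℝ) ≤ (QQ b m t).re := by
  rw [QQre]
  have h1 : 1/(4*t^2) ≤ 1/4 := by
    apply div_le_div_of_nonneg_left (by norm_num) (by norm_num)
    nlinarith
  nlinarith [sq_nonneg (b*t)]

theorem L2bound {ψ : ℝ → ℂ} (hL2 : MemLp ψ 2 (volume.restrict (Set.Ioi 0))) :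
    ∃ A : ℝ, 0 ≤ A ∧ ∀ a R : ℝ, 0 < a → a ≤ R → ∫ t in a..R, ‖ψ t‖^2 ≤ A := by
  have hint : Integrable (fun t => ‖ψ t‖^2) (volume.restrict (Set.Ioi 0)) := by
    have := hL2.integrable_norm_rpow (by norm_num) (by norm_num)
    simpa [ENNReal.toReal_ofNat, Real.rpow_natCast] using this
  refine ⟨∫ t in Set.Ioi (0:ℝ), ‖ψ t‖^2, setIntegral_nonneg measurableSet_Ioi
    (fun t _ => by positivity), fun a R ha haR => ?_⟩
  rw [intervalIntegral.integral_of_le haR]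
  apply setIntegral_mono_set hint
  · filter_upwards with t using by positivity
  · filter_upwards with t
    intro ht
    exact lt_trans ha ht.1

theorem hd1 {ψ : ℝ → ℂ} (hs : ContDiffOn ℝ 2 ψ (Set.Ioi 0)) :
    ∀ r ∈ Set.Ioi (0:ℝ), HasDerivAt ψ (deriv ψ r) r := by
  intro r hr
  exact ((hs.differentiableOn (by norm_num)).differentiableAt
    ((isOpen_Ioi).mem_nhds hr)).hasDerivAt

theorem hd2 {ψ : ℝ → ℂ} (hs : ContDiffOn ℝ 2 ψ (Set.Ioi 0)) :
    ∀ r ∈ Set.Ioi (0:ℝ), HasDerivAt (deriv ψ) (deriv (deriv ψ) r) r := by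
  intro r hr
  have h1 : ContDiffOn ℝ 1 (deriv ψ) (Set.Ioi 0) :=
    hs.deriv_of_isOpen isOpen_Ioi (by norm_num)
  exact ((h1.differentiableOn (by norm_num)).differentiableAt
    ((isOpen_Ioi).mem_nhds hr)).hasDerivAt

-- Wronskian has zero derivative
theorem wderiv {b m : ℝ} {ψ₁ ψ₂ : ℝ → ℂ}
    (hs1 : ContDiffOn ℝ 2 ψ₁ (Set.Ioi 0)) (hs2 : ContDiffOn ℝ 2 ψ₂ (Set.Ioi 0))
    (he1 : ∀ r ∈ Set.Ioi (0:ℝ), deriv (deriv ψ₁) r = QQ b m r * ψ₁ r)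
    (he2 : ∀ r ∈ Set.Ioi (0:ℝ), deriv (deriv ψ₂) r = QQ b m r * ψ₂ r)
    {r : ℝ} (hr : r ∈ Set.Ioi (0:ℝ)) :
    HasDerivAt (fun t => ψ₁ t * deriv ψ₂ t - ψ₂ t * deriv ψ₁ t) 0 r := by
  have h := ((hd1 hs1 r hr).mul (hd2 hs2 r hr)).sub ((hd1 hs2 r hr).mul (hd2 hs1 r hr))
  refine h.congr_deriv ?_
  rw [he1 r hr, he2 r hr]; ring

theorem wconst {b m : ℝ} {ψ₁ ψ₂ : ℝ → ℂ}
    (hs1 : ContDiffOn ℝ 2 ψ₁ (Set.Ioi 0)) (hs2 : ContDiffOn ℝ 2 ψ₂ (Set.Ioi 0))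
    (he1 : ∀ r ∈ Set.Ioi (0:ℝ), deriv (deriv ψ₁) r = QQ b m r * ψ₁ r)
    (he2 : ∀ r ∈ Set.Ioi (0:ℝ), deriv (deriv ψ₂) r = QQ b m r * ψ₂ r)
    {x y : ℝ} (hx : x ∈ Set.Ioi (0:ℝ)) (hy : y ∈ Set.Ioi (0:ℝ)) :
    ψ₁ x * deriv ψ₂ x - ψ₂ x * deriv ψ₁ x = ψ₁ y * deriv ψ₂ y - ψ₂ y * deriv ψ₁ y := by
  have key := intervalIntegral.integral_eq_sub_of_hasDerivAt
    (f := fun t => ψ₁ t * deriv ψ₂ t - ψ₂ t * deriv ψ₁ t) (f' := fun _ => (0:ℂ))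
    (a := x) (b := y) ?_ (intervalIntegrable_const)
  · simp only [intervalIntegral.integral_const, smul_zero] at key
    exact (sub_eq_zero.mp key.symm).symm
  · intro t ht
    have : t ∈ Set.Ioi (0:ℝ) := by
      rcases Set.mem_uIcc.mp ht with h | h
      · exact lt_of_lt_of_le hx.out h.1
      · exact lt_of_lt_of_le hy.out h.1
    exact wderiv hs1 hs2 he1 he2 this

-- derivative of r ↦ re (conj ψ * ψ')
theorem Fderiv {b m : ℝ} {ψ : ℝ → ℂ}
    (hs : ContDiffOn ℝ 2 ψ (Set.Ioi 0))
    (he : ∀ r ∈ Set.Ioi (0:ℝ), deriv (deriv ψ) r = QQ b m r * ψ r)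
    {r : ℝ} (hr : r ∈ Set.Ioi (0:ℝ)) :
    HasDerivAt (fun t => ((starRingEnd ℂ) (ψ t) * deriv ψ t).re)
      (‖deriv ψ r‖^2 + (QQ b m r).re * ‖ψ r‖^2) r := by
  have hc : HasDerivAt (fun t => (starRingEnd ℂ) (ψ t)) ((starRingEnd ℂ) (deriv ψ r)) r :=
    (hd1 hs r hr).star
  have hp := hc.mul (hd2 hs r hr)
  have hre := (Complex.reCLM.hasFDerivAt.comp_hasDerivAt r hp)
  refine hre.congr_deriv ?_
  rw [he r hr]
  simp only [Complex.reCLM_apply, Complex.add_re, Complex.mul_re, Complex.conj_re,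
    Complex.conj_im, Complex.mul_im, Complex.sq_norm, Complex.normSq_apply]
  ring

-- derivative of r ↦ ‖ψ r‖^2
theorem Gderiv {ψ : ℝ → ℂ}
    (hs : ContDiffOn ℝ 2 ψ (Set.Ioi 0))
    {r : ℝ} (hr : r ∈ Set.Ioi (0:ℝ)) :
    HasDerivAt (fun t => ‖ψ t‖^2)
      (2 * ((starRingEnd ℂ) (ψ r) * deriv ψ r).re) r := by
  have hc : HasDerivAt (fun t => (starRingEnd ℂ) (ψ t)) ((starRingEnd ℂ) (deriv ψ r)) r :=
    (hd1 hs r hr).star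
  have hp := hc.mul (hd1 hs r hr)
  have hre := (Complex.reCLM.hasFDerivAt.comp_hasDerivAt r hp)
  have : (fun t => ‖ψ t‖^2) = fun t => Complex.reCLM ((starRingEnd ℂ) (ψ t) * ψ t) := by
    funext t
    simp [Complex.mul_re, Complex.sq_norm, Complex.normSq_apply]
    try ring
  rw [this]
  refine hre.congr_deriv ?_
  simp only [Complex.reCLM_apply, Complex.add_re, Complex.mul_re, Complex.conj_re,
    Complex.conj_im]
  ring
theorem ode' (b m : ℝ) (hm : 0 < m) (ψ : ℝ → ℂ)
    (hode : ∀ r ∈ Set.Ioi (0 : ℝ),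
      -(1 / (2 * (m : ℂ))) * (deriv (deriv ψ) r
          + (1 : ℂ) / 4 * ψ r / (r : ℂ) ^ 2
          - (b : ℂ) ^ 2 * (r : ℂ) ^ 2 / 4 * ψ r)
        = Complex.I * ψ r) :
    ∀ r ∈ Set.Ioi (0:ℝ), deriv (deriv ψ) r = QQ b m r * ψ r := by
  intro r hr
  have hr0 : (r:ℂ) ≠ 0 := by exact_mod_cast (ne_of_gt (mem_Ioi.mp hr))
  have hm0 : (m:ℂ) ≠ 0 := by exact_mod_cast hm.ne'
  have h := hode r hr
  field_simp at h
  have h4 : (4*(r:ℂ)^2) ≠ 0 := by simp [hr0]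
  apply mul_left_cancel₀ h4
  unfold QQ
  push_cast
  field_simp
  linear_combination (-1:ℂ) * h
theorem derivL2bound {b m A : ℝ} {ψ : ℝ → ℂ}
    (hs : ContDiffOn ℝ 2 ψ (Set.Ioi 0))
    (he : ∀ r ∈ Set.Ioi (0:ℝ), deriv (deriv ψ) r = QQ b m r * ψ r)
    (hA0 : 0 ≤ A)
    (hA : ∀ a R : ℝ, 0 < a → a ≤ R → ∫ t in a..R, ‖ψ t‖^2 ≤ A) :
    ∃ B : ℝ, ∀ R : ℝ, 1 ≤ R → ∫ t in (1:ℝ)..R, ‖deriv ψ t‖^2 ≤ B := by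
  by_contra hB
  push_neg at hB
  have hcψ : ContinuousOn ψ (Set.Ioi 0) :=
    fun r hr => ((hd1 hs r hr).continuousAt).continuousWithinAt
  have hcψ' : ContinuousOn (deriv ψ) (Set.Ioi 0) :=
    fun r hr => ((hd2 hs r hr).continuousAt).continuousWithinAt
  have hcF : ContinuousOn (fun t => ((starRingEnd ℂ) (ψ t) * deriv ψ t).re) (Set.Ioi 0) :=
    Complex.continuous_re.comp_continuousOn
      ((continuous_star.comp_continuousOn hcψ).mul hcψ')
  have hcn : ContinuousOn (fun t => ‖ψ t‖^2) (Set.Ioi 0) := (hcψ.norm.pow 2)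
  have hcn' : ContinuousOn (fun t => ‖deriv ψ t‖^2) (Set.Ioi 0) := (hcψ'.norm.pow 2)
  have hIcc : ∀ {x R : ℝ}, 0 < x → x ≤ R → Set.uIcc x R ⊆ Set.Ioi 0 := by
    intro x R hx hR
    rw [Set.uIcc_of_le hR]
    exact fun t ht => lt_of_lt_of_le hx ht.1
  have ftc : ∀ R : ℝ, 1 ≤ R →
      ((starRingEnd ℂ) (ψ R) * deriv ψ R).re - ((starRingEnd ℂ) (ψ 1) * deriv ψ 1).re
        = (∫ t in (1:ℝ)..R, ‖deriv ψ t‖^2)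
          + ∫ t in (1:ℝ)..R, (QQ b m t).re * ‖ψ t‖^2 := by
    intro R hR
    have hInt1 : IntervalIntegrable (fun t => ‖deriv ψ t‖^2) volume 1 R :=
      (hcn'.mono (hIcc one_pos hR)).intervalIntegrable
    have hInt2 : IntervalIntegrable (fun t => (QQ b m t).re * ‖ψ t‖^2) volume 1 R :=
      (((QQreCont b m).mul hcn).mono (hIcc one_pos hR)).intervalIntegrable
    have key := intervalIntegral.integral_eq_sub_of_hasDerivAt
      (f := fun t => ((starRingEnd ℂ) (ψ t) * deriv ψ t).re)
      (f' := fun t => ‖deriv ψ t‖^2 + (QQ b m t).re * ‖ψ t‖^2)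
      (fun t ht => Fderiv hs he (hIcc one_pos hR ht)) (hInt1.add hInt2)
    rw [intervalIntegral.integral_add hInt1 hInt2] at key
    linarith [key]
  have hJ : ∀ R : ℝ, 1 ≤ R →
      -(A/4) ≤ ∫ t in (1:ℝ)..R, (QQ b m t).re * ‖ψ t‖^2 := by
    intro R hR
    have hInt2 : IntervalIntegrable (fun t => (QQ b m t).re * ‖ψ t‖^2) volume 1 R :=
      (((QQreCont b m).mul hcn).mono (hIcc one_pos hR)).intervalIntegrable
    have hIntc : IntervalIntegrable (fun t => -(1/4) * ‖ψ t‖^2) volume 1 R :=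
      ((continuousOn_const.mul hcn).mono (hIcc one_pos hR)).intervalIntegrable
    have h1 := intervalIntegral.integral_mono_on hR hIntc hInt2
      (fun t ht => mul_le_mul_of_nonneg_right (QQre_ge b m t ht.1) (sq_nonneg _))
    rw [intervalIntegral.integral_const_mul] at h1
    have h2 := hA 1 R one_pos hR
    linarith
  obtain ⟨R₁, hR₁, hIR₁⟩ := hB (A/4 - ((starRingEnd ℂ) (ψ 1) * deriv ψ 1).re + 1)
  have hR₁0 : (0:ℝ) < R₁ := lt_of_lt_of_le one_pos hR₁
  have hFge : ∀ R : ℝ, R₁ ≤ R → 1 ≤ ((starRingEnd ℂ) (ψ R) * deriv ψ R).re := by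
    intro R hR
    have hR1 : 1 ≤ R := le_trans hR₁ hR
    have hi1 : IntervalIntegrable (fun t => ‖deriv ψ t‖^2) volume 1 R₁ :=
      (hcn'.mono (hIcc one_pos hR₁)).intervalIntegrable
    have hi2 : IntervalIntegrable (fun t => ‖deriv ψ t‖^2) volume R₁ R :=
      (hcn'.mono (hIcc hR₁0 hR)).intervalIntegrable
    have hmono : (∫ t in (1:ℝ)..R₁, ‖deriv ψ t‖^2) ≤ ∫ t in (1:ℝ)..R, ‖deriv ψ t‖^2 := by
      rw [← intervalIntegral.integral_add_adjacent_intervals hi1 hi2]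
      have h0 : 0 ≤ ∫ t in R₁..R, ‖deriv ψ t‖^2 :=
        intervalIntegral.integral_nonneg hR (fun t _ => sq_nonneg _)
      linarith
    have h1 := ftc R hR1
    have h2 := hJ R hR1
    linarith
  have hgrow : ∀ T : ℝ, R₁ ≤ T → 2*(T - R₁) ≤ ‖ψ T‖^2 := by
    intro T hT
    have hsub := hIcc hR₁0 hT
    have hInt : IntervalIntegrable
        (fun t => 2 * ((starRingEnd ℂ) (ψ t) * deriv ψ t).re) volume R₁ T :=
      ((continuousOn_const.mul hcF).mono hsub).intervalIntegrable
    have ftc2 := intervalIntegral.integral_eq_sub_of_hasDerivAt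
      (f := fun t => ‖ψ t‖^2)
      (f' := fun t => 2 * ((starRingEnd ℂ) (ψ t) * deriv ψ t).re)
      (fun t ht => Gderiv hs (hsub ht)) hInt
    have hlow := intervalIntegral.integral_mono_on hT
      (intervalIntegrable_const (μ := volume) (c := (2:ℝ))) hInt
      (fun t ht => by linarith [hFge t ht.1])
    rw [intervalIntegral.integral_const, ftc2] at hlow
    simp only [smul_eq_mul] at hlow
    nlinarith [sq_nonneg ‖ψ R₁‖]
  have hS : R₁ + 1 ≤ R₁ + 1 + (A+1)/2 := by linarith
  have hsub2 := hIcc (by linarith : (0:ℝ) < R₁ + 1) hS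
  have hlow2 := intervalIntegral.integral_mono_on hS
    (intervalIntegrable_const (μ := volume) (c := (2:ℝ)))
    ((hcn.mono hsub2).intervalIntegrable)
    (fun t ht => by
      have h2 := hgrow t (by linarith [ht.1])
      have : (2:ℝ) ≤ 2*(t - R₁) := by linarith [ht.1]
      linarith)
  rw [intervalIntegral.integral_const] at hlow2
  simp only [smul_eq_mul] at hlow2
  have hup := hA (R₁+1) (R₁ + 1 + (A+1)/2) (by linarith) hS
  nlinarith
theorem Wzero {b m : ℝ} {ψ₁ ψ₂ : ℝ → ℂ} {A₁ A₂ B₁ B₂ : ℝ}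
    (hs1 : ContDiffOn ℝ 2 ψ₁ (Set.Ioi 0)) (hs2 : ContDiffOn ℝ 2 ψ₂ (Set.Ioi 0))
    (he1 : ∀ r ∈ Set.Ioi (0:ℝ), deriv (deriv ψ₁) r = QQ b m r * ψ₁ r)
    (he2 : ∀ r ∈ Set.Ioi (0:ℝ), deriv (deriv ψ₂) r = QQ b m r * ψ₂ r)
    (hA1 : ∀ a R : ℝ, 0 < a → a ≤ R → ∫ t in a..R, ‖ψ₁ t‖^2 ≤ A₁)
    (hA2 : ∀ a R : ℝ, 0 < a → a ≤ R → ∫ t in a..R, ‖ψ₂ t‖^2 ≤ A₂)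
    (hB1 : ∀ R : ℝ, 1 ≤ R → ∫ t in (1:ℝ)..R, ‖deriv ψ₁ t‖^2 ≤ B₁)
    (hB2 : ∀ R : ℝ, 1 ≤ R → ∫ t in (1:ℝ)..R, ‖deriv ψ₂ t‖^2 ≤ B₂) :
    ∀ r ∈ Set.Ioi (0:ℝ), ψ₁ r * deriv ψ₂ r - ψ₂ r * deriv ψ₁ r = 0 := by
  have h1I : (1:ℝ) ∈ Set.Ioi (0:ℝ) := mem_Ioi.mpr one_pos
  have hco1 : ContinuousOn ψ₁ (Set.Ioi 0) :=
    fun r hr => ((hd1 hs1 r hr).continuousAt).continuousWithinAt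
  have hco2 : ContinuousOn ψ₂ (Set.Ioi 0) :=
    fun r hr => ((hd1 hs2 r hr).continuousAt).continuousWithinAt
  have hco1' : ContinuousOn (deriv ψ₁) (Set.Ioi 0) :=
    fun r hr => ((hd2 hs1 r hr).continuousAt).continuousWithinAt
  have hco2' : ContinuousOn (deriv ψ₂) (Set.Ioi 0) :=
    fun r hr => ((hd2 hs2 r hr).continuousAt).continuousWithinAt
  have hcn1 : ContinuousOn (fun t => ‖ψ₁ t‖^2) (Set.Ioi 0) := hco1.norm.pow 2
  have hcn2 : ContinuousOn (fun t => ‖ψ₂ t‖^2) (Set.Ioi 0) := hco2.norm.pow 2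
  have hcn1' : ContinuousOn (fun t => ‖deriv ψ₁ t‖^2) (Set.Ioi 0) := hco1'.norm.pow 2
  have hcn2' : ContinuousOn (fun t => ‖deriv ψ₂ t‖^2) (Set.Ioi 0) := hco2'.norm.pow 2
  have hIcc : ∀ {R : ℝ}, 1 ≤ R → Set.uIcc (1:ℝ) R ⊆ Set.Ioi 0 := by
    intro R hR
    rw [Set.uIcc_of_le hR]
    exact fun t ht => lt_of_lt_of_le one_pos ht.1
  set c := ψ₁ 1 * deriv ψ₂ 1 - ψ₂ 1 * deriv ψ₁ 1 with hcdef
  set M := (A₁+A₂+B₁+B₂)/2 with hMdef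
  have key : ∀ R : ℝ, 1 ≤ R → ‖c‖ * (R-1) ≤ M := by
    intro R hR
    have hi1 : IntervalIntegrable (fun t => ‖ψ₁ t‖^2) volume 1 R :=
      (hcn1.mono (hIcc hR)).intervalIntegrable
    have hi2 : IntervalIntegrable (fun t => ‖ψ₂ t‖^2) volume 1 R :=
      (hcn2.mono (hIcc hR)).intervalIntegrable
    have hi1' : IntervalIntegrable (fun t => ‖deriv ψ₁ t‖^2) volume 1 R :=
      (hcn1'.mono (hIcc hR)).intervalIntegrable
    have hi2' : IntervalIntegrable (fun t => ‖deriv ψ₂ t‖^2) volume 1 R :=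
      (hcn2'.mono (hIcc hR)).intervalIntegrable
    have hg : IntervalIntegrable
        (fun t => (‖ψ₁ t‖^2 + ‖deriv ψ₂ t‖^2 + ‖ψ₂ t‖^2 + ‖deriv ψ₁ t‖^2)/2) volume 1 R := by
      apply IntervalIntegrable.div_const
      exact ((hi1.add hi2').add hi2).add hi1'
    have hptw : ∀ t ∈ Set.Icc (1:ℝ) R,
        ‖c‖ ≤ (‖ψ₁ t‖^2 + ‖deriv ψ₂ t‖^2 + ‖ψ₂ t‖^2 + ‖deriv ψ₁ t‖^2)/2 := by
      intro t ht
      have htI : t ∈ Set.Ioi (0:ℝ) := lt_of_lt_of_le one_pos ht.1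
      have hW : c = ψ₁ t * deriv ψ₂ t - ψ₂ t * deriv ψ₁ t :=
        wconst hs1 hs2 he1 he2 h1I htI
      rw [hW]
      have h1 : ‖ψ₁ t * deriv ψ₂ t - ψ₂ t * deriv ψ₁ t‖
          ≤ ‖ψ₁ t‖*‖deriv ψ₂ t‖ + ‖ψ₂ t‖*‖deriv ψ₁ t‖ := by
        calc ‖ψ₁ t * deriv ψ₂ t - ψ₂ t * deriv ψ₁ t‖
            ≤ ‖ψ₁ t * deriv ψ₂ t‖ + ‖ψ₂ t * deriv ψ₁ t‖ := norm_sub_le _ _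
          _ = ‖ψ₁ t‖*‖deriv ψ₂ t‖ + ‖ψ₂ t‖*‖deriv ψ₁ t‖ := by rw [norm_mul, norm_mul]
      nlinarith [sq_nonneg (‖ψ₁ t‖ - ‖deriv ψ₂ t‖), sq_nonneg (‖ψ₂ t‖ - ‖deriv ψ₁ t‖)]
    have hmono := intervalIntegral.integral_mono_on hR
      (intervalIntegrable_const (μ := volume) (c := ‖c‖)) hg hptw
    rw [intervalIntegral.integral_const] at hmono
    simp only [smul_eq_mul] at hmono
    have hsplit : (∫ t in (1:ℝ)..R,
        (‖ψ₁ t‖^2 + ‖deriv ψ₂ t‖^2 + ‖ψ₂ t‖^2 + ‖deriv ψ₁ t‖^2)/2)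
        = ((∫ t in (1:ℝ)..R, ‖ψ₁ t‖^2) + (∫ t in (1:ℝ)..R, ‖deriv ψ₂ t‖^2)
          + (∫ t in (1:ℝ)..R, ‖ψ₂ t‖^2) + (∫ t in (1:ℝ)..R, ‖deriv ψ₁ t‖^2))/2 := by
      rw [intervalIntegral.integral_div, intervalIntegral.integral_add ((hi1.add hi2').add hi2) hi1',
        intervalIntegral.integral_add (hi1.add hi2') hi2, intervalIntegral.integral_add hi1 hi2']
    rw [hsplit] at hmono
    have := hA1 1 R one_pos hR
    have := hA2 1 R one_pos hR
    have := hB1 R hR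
    have := hB2 R hR
    rw [hMdef]
    calc ‖c‖ * (R-1) = (R-1) * ‖c‖ := by ring
      _ ≤ _ := hmono
      _ ≤ (A₁+A₂+B₁+B₂)/2 := by linarith
  have hc0 : c = 0 := by
    by_contra hc
    have hcpos : 0 < ‖c‖ := norm_pos_iff.mpr hc
    have hM0 : 0 ≤ M := by
      have := key 1 le_rfl
      linarith
    have hdiv : 0 ≤ (M+1)/‖c‖ := div_nonneg (by linarith) hcpos.le
    have hkey := key (1 + (M+1)/‖c‖) (by linarith)
    rw [show (1 + (M+1)/‖c‖ - 1) = (M+1)/‖c‖ by ring] at hkey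
    rw [mul_div_cancel₀ _ (ne_of_gt hcpos)] at hkey
    linarith
  intro r hr
  rw [wconst hs1 hs2 he1 he2 hr h1I, ← hcdef, hc0]
theorem depend {b m : ℝ} {ψ₁ ψ₂ : ℝ → ℂ}
    (hs1 : ContDiffOn ℝ 2 ψ₁ (Set.Ioi 0)) (hs2 : ContDiffOn ℝ 2 ψ₂ (Set.Ioi 0))
    (he1 : ∀ r ∈ Set.Ioi (0:ℝ), deriv (deriv ψ₁) r = QQ b m r * ψ₁ r)
    (he2 : ∀ r ∈ Set.Ioi (0:ℝ), deriv (deriv ψ₂) r = QQ b m r * ψ₂ r)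
    (hW : ∀ r ∈ Set.Ioi (0:ℝ), ψ₁ r * deriv ψ₂ r - ψ₂ r * deriv ψ₁ r = 0)
    {r₀ : ℝ} (hr₀ : r₀ ∈ Set.Ioi (0:ℝ)) (hne : ψ₁ r₀ ≠ 0) :
    ∀ r ∈ Set.Ioi (0:ℝ), ψ₂ r = (ψ₂ r₀ / ψ₁ r₀) * ψ₁ r := by
  set k := ψ₂ r₀ / ψ₁ r₀ with hk
  set φ : ℝ → ℂ := fun t => ψ₂ t - k * ψ₁ t with hφ
  set φ' : ℝ → ℂ := fun t => deriv ψ₂ t - k * deriv ψ₁ t with hφ'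
  have hφd1 : ∀ r ∈ Set.Ioi (0:ℝ), HasDerivAt φ (φ' r) r := by
    intro r hr
    exact (hd1 hs2 r hr).sub ((hd1 hs1 r hr).const_mul k)
  have hφd2 : ∀ r ∈ Set.Ioi (0:ℝ), HasDerivAt φ' (QQ b m r * φ r) r := by
    intro r hr
    have h := (hd2 hs2 r hr).sub ((hd2 hs1 r hr).const_mul k)
    refine h.congr_deriv ?_
    rw [he1 r hr, he2 r hr, hφ]
    ring
  have hφ0 : φ r₀ = 0 := by
    rw [hφ, hk]
    field_simp
    ring
  have hφ'0 : φ' r₀ = 0 := by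
    have h := hW r₀ hr₀
    rw [hφ', hk]
    field_simp
    linear_combination h
  intro r hr
  have hr0 : (0:ℝ) < r := hr
  have hr₀0 : (0:ℝ) < r₀ := hr₀
  set a : ℝ := min r r₀ / 2 with ha
  set T : ℝ := max r r₀ + 1 with hT
  clear_value a T
  have ha0 : 0 < a := by
    rw [ha]
    have := lt_min hr0 hr₀0
    linarith
  have hrmem : r ∈ Set.Ioo a T := by
    constructor
    · rw [ha]
      have h1 : min r r₀ ≤ r := min_le_left _ _
      have := lt_min hr0 hr₀0
      linarith
    · rw [hT]
      have : r ≤ max r r₀ := le_max_left _ _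
      linarith
  have hr₀mem : r₀ ∈ Set.Ioo a T := by
    constructor
    · rw [ha]
      have h1 : min r r₀ ≤ r₀ := min_le_right _ _
      have := lt_min hr0 hr₀0
      linarith
    · rw [hT]
      have : r₀ ≤ max r r₀ := le_max_right _ _
      linarith
  have haT : a < T := lt_trans hrmem.1 hrmem.2
  have hT0 : 0 < T := lt_trans ha0 haT
  -- bound on ‖QQ b m t‖ on Icc a T
  set C : ℝ := b^2*T^2/4 + 1/(4*a^2) + 2*|m| with hC
  clear_value C
  have hQbound : ∀ t ∈ Set.Icc a T, ‖QQ b m t‖ ≤ C := by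
    intro t ht
    have hta : a ≤ t := ht.1
    have htT : t ≤ T := ht.2
    have ht0 : 0 < t := lt_of_lt_of_le ha0 hta
    have h1 : ‖QQ b m t‖ ≤ ‖((b^2*t^2/4 - 1/(4*t^2) : ℝ) : ℂ)‖ + ‖(2*(m:ℝ)*Complex.I : ℂ)‖ := by
      unfold QQ
      exact norm_sub_le _ _
    have h2 : ‖((b^2*t^2/4 - 1/(4*t^2) : ℝ) : ℂ)‖ = |b^2*t^2/4 - 1/(4*t^2)| := by
      rw [Complex.norm_real, Real.norm_eq_abs]
    have h3 : ‖(2*(m:ℝ)*Complex.I : ℂ)‖ = 2*|m| := by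
      rw [norm_mul, Complex.norm_I, mul_one, norm_mul]
      norm_num [Complex.norm_real, Real.norm_eq_abs]
    have h4 : |b^2*t^2/4 - 1/(4*t^2)| ≤ b^2*T^2/4 + 1/(4*a^2) := by
      rw [abs_sub_le_iff]
      constructor
      · have ht2 : t^2 ≤ T^2 := by nlinarith
        have hb1 : b^2*t^2/4 ≤ b^2*T^2/4 := by
          have := mul_le_mul_of_nonneg_left ht2 (sq_nonneg b)
          linarith
        have hb2 : 0 < 1/(4*t^2) := by positivity
        have hb3 : 0 < 1/(4*a^2) := by positivity
        linarith
      · have hb1 : 1/(4*t^2) ≤ 1/(4*a^2) := by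
          apply div_le_div_of_nonneg_left (by norm_num) (by positivity)
          nlinarith
        have hb2 : 0 ≤ b^2*t^2/4 := by positivity
        have hb3 : 0 ≤ b^2*T^2/4 := by positivity
        linarith
    rw [hC]
    rw [h2, h3] at h1
    linarith
  set K : NNReal := Real.toNNReal (max 1 C) with hK
  set v : ℝ → ℂ × ℂ → ℂ × ℂ := fun t p => (p.2, QQ b m t * p.1) with hv
  set s : ℝ → Set (ℂ × ℂ) := fun t => if t ∈ Set.Icc a T then Set.univ else (∅ : Set (ℂ × ℂ))
    with hsdef
  have hlip : ∀ t, LipschitzOnWith K (v t) (s t) := by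
    intro t
    by_cases h : t ∈ Set.Icc a T
    · rw [hsdef]
      simp only [h, if_true]
      rw [lipschitzOnWith_univ]
      apply LipschitzWith.of_dist_le_mul
      intro p q
      rw [Prod.dist_eq, Prod.dist_eq]
      have hd : dist (QQ b m t * p.1) (QQ b m t * q.1) = ‖QQ b m t‖ * dist p.1 q.1 := by
        rw [dist_eq_norm, dist_eq_norm, ← mul_sub, norm_mul]
      rw [hv]
      simp only
      rw [hd]
      have hKC : C ≤ (K : ℝ) := by
        rw [hK, Real.coe_toNNReal _ (le_trans zero_le_one (le_max_left 1 C))]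
        exact le_max_right _ _
      have hK1 : 1 ≤ (K : ℝ) := by
        rw [hK, Real.coe_toNNReal _ (le_trans zero_le_one (le_max_left 1 C))]
        exact le_max_left _ _
      have hQC := hQbound t h
      have d1 : dist p.1 q.1 ≤ max (dist p.1 q.1) (dist p.2 q.2) := le_max_left _ _
      have d2 : dist p.2 q.2 ≤ max (dist p.1 q.1) (dist p.2 q.2) := le_max_right _ _
      have h0 : (0:ℝ) ≤ dist p.1 q.1 := dist_nonneg
      have h0' : (0:ℝ) ≤ max (dist p.1 q.1) (dist p.2 q.2) :=
        le_trans h0 d1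
      apply max_le
      · calc dist p.2 q.2 ≤ max (dist p.1 q.1) (dist p.2 q.2) := d2
          _ ≤ (K:ℝ) * max (dist p.1 q.1) (dist p.2 q.2) := by nlinarith
      · calc ‖QQ b m t‖ * dist p.1 q.1 ≤ C * dist p.1 q.1 :=
            mul_le_mul_of_nonneg_right hQC h0
          _ ≤ (K:ℝ) * max (dist p.1 q.1) (dist p.2 q.2) := by nlinarith
    · rw [hsdef]
      simp only [h, if_false]
      exact lipschitzOnWith_empty _ _
  have hmemIoi : ∀ t ∈ Set.Ioo a T, t ∈ Set.Ioi (0:ℝ) := fun t ht => lt_of_lt_of_le ha0 ht.1.le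
  have hsmem : ∀ t ∈ Set.Ioo a T, ∀ p : ℂ × ℂ, p ∈ s t := by
    intro t ht p
    rw [hsdef]
    simp [Set.mem_Icc.mpr ⟨ht.1.le, ht.2.le⟩]
  have hf : ∀ t ∈ Set.Ioo a T,
      HasDerivAt (fun u => (φ u, φ' u)) (v t (φ t, φ' t)) t ∧ (φ t, φ' t) ∈ s t := by
    intro t ht
    refine ⟨?_, hsmem t ht _⟩
    exact (hφd1 t (hmemIoi t ht)).prodMk (hφd2 t (hmemIoi t ht))
  have hg : ∀ t ∈ Set.Ioo a T,
      HasDerivAt (fun _ : ℝ => ((0:ℂ), (0:ℂ))) (v t ((0:ℂ),(0:ℂ))) t ∧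
        ((0:ℂ),(0:ℂ)) ∈ s t := by
    intro t ht
    refine ⟨?_, hsmem t ht _⟩
    have : v t ((0:ℂ),(0:ℂ)) = ((0:ℂ),(0:ℂ)) := by
      rw [hv]; simp
    rw [this]
    exact hasDerivAt_const _ _
  have heq := ODE_solution_unique_of_mem_Ioo (fun t _ => hlip t) hr₀mem hf hg
    (by rw [hφ0, hφ'0])
  have := heq hrmem
  simp only [Prod.mk.injEq] at this
  have hφr : φ r = 0 := this.1
  rw [hφ] at hφr
  simp only at hφr
  linear_combination hφr
/-- For `b > 0`, `m > 0`, any two twice continuously differentiable, square-integrable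
solutions on `(0,∞)` of the `l = 0` deficiency equation
`−(1/(2m))[ψ'' + (1/4)ψ/r² − (b²r²/4)ψ] = i ψ` are linearly dependent over `ℂ`. -/
theorem deficiency_plus_solutions_l_zero_linearly_dependent
    (b m : ℝ) (hb : 0 < b) (hm : 0 < m)
    (ψ₁ ψ₂ : ℝ → ℂ)
    (hsmooth₁ : ContDiffOn ℝ 2 ψ₁ (Set.Ioi 0))
    (hsmooth₂ : ContDiffOn ℝ 2 ψ₂ (Set.Ioi 0))
    (hL2₁ : MemLp ψ₁ 2 (volume.restrict (Set.Ioi 0)))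
    (hL2₂ : MemLp ψ₂ 2 (volume.restrict (Set.Ioi 0)))
    (hode₁ : ∀ r ∈ Set.Ioi (0 : ℝ),
      -(1 / (2 * (m : ℂ))) * (deriv (deriv ψ₁) r
          + (1 : ℂ) / 4 * ψ₁ r / (r : ℂ) ^ 2
          - (b : ℂ) ^ 2 * (r : ℂ) ^ 2 / 4 * ψ₁ r)
        = Complex.I * ψ₁ r)
    (hode₂ : ∀ r ∈ Set.Ioi (0 : ℝ),
      -(1 / (2 * (m : ℂ))) * (deriv (deriv ψ₂) r
          + (1 : ℂ) / 4 * ψ₂ r / (r : ℂ) ^ 2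
          - (b : ℂ) ^ 2 * (r : ℂ) ^ 2 / 4 * ψ₂ r)
        = Complex.I * ψ₂ r) :
    ∃ c₁ c₂ : ℂ, ¬ (c₁ = 0 ∧ c₂ = 0) ∧
      ∀ r ∈ Set.Ioi (0 : ℝ), c₁ * ψ₁ r + c₂ * ψ₂ r = 0 := by
  have he1 := ode' b m hm ψ₁ hode₁
  have he2 := ode' b m hm ψ₂ hode₂
  by_cases h1 : ∀ r ∈ Set.Ioi (0:ℝ), ψ₁ r = 0
  · refine ⟨1, 0, by simp, fun r hr => by simp [h1 r hr]⟩
  · push_neg at h1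
    obtain ⟨r₀, hr₀, hne⟩ := h1
    obtain ⟨A₁, hA₁0, hA₁⟩ := L2bound hL2₁
    obtain ⟨A₂, hA₂0, hA₂⟩ := L2bound hL2₂
    obtain ⟨B₁, hB₁⟩ := derivL2bound hsmooth₁ he1 hA₁0 hA₁
    obtain ⟨B₂, hB₂⟩ := derivL2bound hsmooth₂ he2 hA₂0 hA₂
    have hW := Wzero hsmooth₁ hsmooth₂ he1 he2 hA₁ hA₂ hB₁ hB₂
    have hdep := depend hsmooth₁ hsmooth₂ he1 he2 hW hr₀ hne
    refine ⟨ψ₂ r₀ / ψ₁ r₀, -1, fun h => by simpa using h.2, fun r hr => ?_⟩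
    rw [hdep r hr]
    ring
end
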